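/- There are exactly 2^ℵ₀ Epstein-incomplete extensions of F: for each nonempty S ⊆ ω\{0}, the logic FΛ_S with Λ_S = {q ↪ p^n : n ∈ S} (where p^0 := q ↪ p and p^{n+1} := p → p^n) is Epstein incomplete, and distinct nonempty S, T ⊆ ω\{0} yield distinct logics. -/
import Mathlib


/-- Epstein formulas: letters, ¬, ∨, ∧, →, ↔, △ (tri), ↪ (hook). -/
inductive EFor : Type
  | var : ℕ → EFor
  | neg : EFor → EFor
  | or : EFor → EFor → EFor
  | and : EFor → EFor → EFor
  | imp : EFor → EFor → EFor
  | iff : EFor → EFor → EFor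
  | tri : EFor → EFor → EFor
  | hook : EFor → EFor → EFor
  deriving DecidableEq

/-- An Epstein model: a valuation of letters and a binary relation on formulas. -/
structure EModel : Type where
  v : ℕ → Prop
  R : Set (EFor × EFor)

/-- Epstein satisfaction. -/
def sat (M : EModel) : EFor → Prop
  | .var n => M.v n
  | .neg φ => ¬ sat M φ
  | .or φ ψ => sat M φ ∨ sat M ψ
  | .and φ ψ => sat M φ ∧ sat M ψ
  | .imp φ ψ => sat M φ → sat M ψ
  | .iff φ ψ => (sat M φ ↔ sat M ψ)
  | .tri φ ψ => (sat M φ ∧ sat M ψ) ∧ (φ, ψ) ∈ M.R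
  | .hook φ ψ => (sat M φ → sat M ψ) ∧ (φ, ψ) ∈ M.R

/-- The Omega set of a model. -/
def Omega (M : EModel) : Set (EFor × EFor) :=
  {p | ¬ sat M (.imp p.1 p.2)}

/-- The S-set of a model. -/
def Sset (M : EModel) : Set EModel :=
  {N | N.v = M.v ∧ M.R \ Omega M ⊆ N.R ∧ N.R ⊆ M.R ∪ Omega M}

/-- The theory of a model. -/
def Th (M : EModel) : Set EFor := {φ | sat M φ}

/-- Substitution: extend a map on letters homomorphically. -/
def esubst (σ : ℕ → EFor) : EFor → EFor
  | .var n => σ n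
  | .neg φ => .neg (esubst σ φ)
  | .or φ ψ => .or (esubst σ φ) (esubst σ ψ)
  | .and φ ψ => .and (esubst σ φ) (esubst σ ψ)
  | .imp φ ψ => .imp (esubst σ φ) (esubst σ ψ)
  | .iff φ ψ => .iff (esubst σ φ) (esubst σ ψ)
  | .tri φ ψ => .tri (esubst σ φ) (esubst σ ψ)
  | .hook φ ψ => .hook (esubst σ φ) (esubst σ ψ)

/-- A boolean homomorphism: any assignment respecting the boolean connectives
(no constraint on △, ↪, which are treated as atoms). -/
def BoolHom (w : EFor → Prop) : Prop :=
  (∀ φ, w (.neg φ) ↔ ¬ w φ) ∧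
  (∀ φ ψ, w (.or φ ψ) ↔ (w φ ∨ w ψ)) ∧
  (∀ φ ψ, w (.and φ ψ) ↔ (w φ ∧ w ψ)) ∧
  (∀ φ ψ, w (.imp φ ψ) ↔ (w φ → w ψ)) ∧
  (∀ φ ψ, w (.iff φ ψ) ↔ (w φ ↔ w ψ))

/-- Classical tautologies in the language of Epstein logic. -/
def Taut (φ : EFor) : Prop := ∀ w, BoolHom w → w φ

/-- The logic FΛ: least set containing CPL, the two Epstein axioms and Λ,
closed under uniform substitution and modus ponens. -/
inductive FLam (Λ : Set EFor) : EFor → Prop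
  | taut {φ} : Taut φ → FLam Λ φ
  | ax1 : FLam Λ (.imp (.hook (.var 0) (.var 1)) (.imp (.var 0) (.var 1)))
  | ax2 : FLam Λ (.iff (.tri (.var 0) (.var 1))
      (.and (.hook (.var 0) (.var 1)) (.and (.var 0) (.var 1))))
  | extra {φ} : φ ∈ Λ → FLam Λ φ
  | subst {φ} (σ : ℕ → EFor) : FLam Λ φ → FLam Λ (esubst σ φ)
  | mp {φ ψ} : FLam Λ (.imp φ ψ) → FLam Λ φ → FLam Λ ψ

/-- The base logic F. -/
def Fmem : EFor → Prop := FLam ∅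

/-- Hilbert derivability from premises Γ over a logic L. -/
inductive Deriv (L : EFor → Prop) (Γ : Set EFor) : EFor → Prop
  | thm {φ} : L φ → Deriv L Γ φ
  | prem {φ} : φ ∈ Γ → Deriv L Γ φ
  | mp {φ ψ} : Deriv L Γ (.imp φ ψ) → Deriv L Γ φ → Deriv L Γ ψ

/-- Validity on a relation: true in all models built over it. -/
def relSat (R : Set (EFor × EFor)) (φ : EFor) : Prop :=
  ∀ v : ℕ → Prop, sat ⟨v, R⟩ φ

def etop : EFor := .or (.var 0) (.neg (.var 0))
def ebot : EFor := .neg etop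

/-- p^0 := q ↪ p, p^{n+1} := p → p^n. -/
def qTow : ℕ → EFor
  | 0 => .hook (.var 1) (.var 0)
  | n + 1 => .imp (.var 0) (qTow n)

/-- Λ_S = {q ↪ p^n : n ∈ S}. -/
def LamS (S : Set ℕ) : Set EFor := {χ | ∃ n ∈ S, χ = .hook (.var 1) (qTow n)}

def FLamSet (Λ : Set EFor) : Set EFor := {φ | FLam Λ φ}

/-- A logic: an extension of F closed under substitution and modus ponens. -/
def IsLogic (L : Set EFor) : Prop :=
  (∀ φ, Fmem φ → φ ∈ L) ∧ (∀ φ (σ : ℕ → EFor), φ ∈ L → esubst σ φ ∈ L) ∧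
  (∀ φ ψ, EFor.imp φ ψ ∈ L → φ ∈ L → ψ ∈ L)

/-- Epstein incompleteness: no adequate set of Epstein relations. -/
def EpsteinIncomplete (L : Set EFor) : Prop :=
  ¬ ∃ X : Set (Set (EFor × EFor)), L = {φ | ∀ R ∈ X, relSat R φ}


/-! ### Auxiliary machinery -/

lemma esubst_comp (σ τ : ℕ → EFor) (φ : EFor) :
    esubst σ (esubst τ φ) = esubst (fun n => esubst σ (τ n)) φ := by
  induction φ <;> simp [esubst, *]

lemma esubst_id (φ : EFor) : esubst .var φ = φ := by
  induction φ <;> simp [esubst, *]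

lemma sat_boolhom (M : EModel) (σ : ℕ → EFor) :
    BoolHom (fun φ => sat M (esubst σ φ)) := by
  refine ⟨?_, ?_, ?_, ?_, ?_⟩ <;> intros <;> simp [esubst, sat]

lemma soundness {Λ : Set EFor} {M : EModel}
    (H1 : ∀ χ ∈ Λ, ∀ σ, sat M (esubst σ χ)) :
    ∀ φ, FLam Λ φ → ∀ σ, sat M (esubst σ φ) := by
  intro φ h
  induction h with
  | taut ht => exact fun σ => ht _ (sat_boolhom M σ)
  | ax1 => intro σ; simp [esubst, sat]; tauto
  | ax2 => intro σ; simp [esubst, sat]; tauto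
  | extra hχ => exact H1 _ hχ
  | subst τ _ ih => intro σ; rw [esubst_comp]; exact ih _
  | mp _ _ ih1 ih2 =>
      intro σ
      have h1 := ih1 σ
      simp only [esubst, sat] at h1
      exact h1 (ih2 σ)

lemma sat_qTow (M : EModel) (σ : ℕ → EFor) :
    ∀ n, sat M (esubst σ (qTow (n+1))) ↔
      (sat M (σ 0) → (sat M (σ 1) → sat M (σ 0)) ∧ (σ 1, σ 0) ∈ M.R) := by
  intro n
  induction n with
  | zero => simp [qTow, esubst, sat]
  | succ k ih =>
      show (sat M (σ 0) → _) ↔ _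
      rw [ih]
      tauto

lemma tow_inj (σ : ℕ → EFor) :
    ∀ m n, esubst σ (qTow m) = qTow n → m = n := by
  intro m
  induction m with
  | zero =>
      intro n h
      cases n with
      | zero => rfl
      | succ k => simp [qTow, esubst] at h
  | succ j ih =>
      intro n h
      cases n with
      | zero => simp [qTow, esubst] at h
      | succ k =>
          simp only [qTow, esubst, EFor.imp.injEq] at h
          exact congrArg Nat.succ (ih k h.2)

/-- Model refuting `(q→p)→(q↪p)`: everything related except `(q,p)`. -/
def M1 : EModel := ⟨fun _ => False, {p | p ≠ (.var 1, .var 0)}⟩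

/-- Model refuting `q↪pⁿ`: everything related except `(q, pⁿ)`. -/
def M2 (n : ℕ) : EModel := ⟨fun _ => False, {p | p ≠ (.var 1, qTow n)}⟩

lemma H1M1 {S : Set ℕ} (h0 : 0 ∉ S) :
    ∀ χ ∈ LamS S, ∀ σ, sat M1 (esubst σ χ) := by
  rintro χ ⟨n, hn, rfl⟩ σ
  have hn0 : n ≠ 0 := fun e => h0 (e ▸ hn)
  obtain ⟨k, rfl⟩ : ∃ k, n = k + 1 := ⟨n - 1, by omega⟩
  refine ⟨?_, ?_⟩
  · intro h1
    rw [sat_qTow]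
    intro h0'
    refine ⟨fun _ => h0', ?_⟩
    intro heq
    rw [Prod.mk.injEq] at heq
    simp only [esubst] at h1
    rw [heq.1] at h1
    exact h1
  · intro heq
    rw [Prod.mk.injEq] at heq
    have h2 := heq.2
    simp [qTow, esubst] at h2

lemma H1M2 {T : Set ℕ} {n : ℕ} (h0 : 0 ∉ T) (hn : n ∉ T) :
    ∀ χ ∈ LamS T, ∀ σ, sat (M2 n) (esubst σ χ) := by
  rintro χ ⟨m, hm, rfl⟩ σ
  have hm0 : m ≠ 0 := fun e => h0 (e ▸ hm)
  obtain ⟨k, rfl⟩ : ∃ k, m = k + 1 := ⟨m - 1, by omega⟩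
  refine ⟨?_, ?_⟩
  · intro h1
    rw [sat_qTow]
    intro h0'
    refine ⟨fun _ => h0', ?_⟩
    intro heq
    rw [Prod.mk.injEq] at heq
    simp only [esubst] at h1
    rw [heq.1] at h1
    exact h1
  · intro heq
    rw [Prod.mk.injEq] at heq
    exact hn (tow_inj σ _ _ heq.2 ▸ hm)

/-- The witnessing formula `(q→p)→(q↪p)`. -/
def chi : EFor := .imp (.imp (.var 1) (.var 0)) (.hook (.var 1) (.var 0))

lemma chi_not_mem {S : Set ℕ} (h0 : 0 ∉ S) : chi ∉ FLamSet (LamS S) := by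
  intro h
  have hs := soundness (H1M1 h0) _ h .var
  rw [esubst_id] at hs
  exact (hs (fun h => h.elim)).2 rfl

lemma tow_not_mem {T : Set ℕ} {n : ℕ} (h0 : 0 ∉ T) (hn : n ∉ T) :
    EFor.hook (.var 1) (qTow n) ∉ FLamSet (LamS T) := by
  intro h
  have hs := soundness (H1M2 h0 hn) _ h .var
  rw [esubst_id] at hs
  exact hs.2 rfl

lemma incomplete {S : Set ℕ} (hne : S.Nonempty) (h0 : 0 ∉ S) :
    EpsteinIncomplete (FLamSet (LamS S)) := by
  rintro ⟨X, hX⟩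
  obtain ⟨n, hn⟩ := hne
  have hmem : EFor.hook (.var 1) (qTow n) ∈ FLamSet (LamS S) :=
    FLam.extra ⟨n, hn, rfl⟩
  have hn0 : n ≠ 0 := fun e => h0 (e ▸ hn)
  obtain ⟨k, rfl⟩ : ∃ k, n = k + 1 := ⟨n - 1, by omega⟩
  have hchi : chi ∈ {φ | ∀ R ∈ X, relSat R φ} := by
    intro R hR v
    have hv := (hX ▸ hmem) R hR (fun _ => True)
    have hmemR : (EFor.var 1, EFor.var 0) ∈ R := by
      have h2 := hv.1 trivial
      rw [← esubst_id (qTow (k+1)), sat_qTow] at h2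
      exact (h2 trivial).2
    exact fun himp => ⟨himp, hmemR⟩
  rw [← hX] at hchi
  exact chi_not_mem h0 hchi

lemma distinct_aux {S T : Set ℕ} (h0T : 0 ∉ T) {n : ℕ}
    (hnS : n ∈ S) (hnT : n ∉ T) :
    FLamSet (LamS S) ≠ FLamSet (LamS T) := by
  intro h
  exact tow_not_mem h0T hnT
    (h ▸ (FLam.extra ⟨n, hnS, rfl⟩ : EFor.hook (.var 1) (qTow n) ∈ FLamSet (LamS S)))

lemma FLam_mono {Λ Λ' : Set EFor} (h : Λ ⊆ Λ') {φ} (hφ : FLam Λ φ) : FLam Λ' φ := by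
  induction hφ with
  | taut ht => exact .taut ht
  | ax1 => exact .ax1
  | ax2 => exact .ax2
  | extra hχ => exact .extra (h hχ)
  | subst σ _ ih => exact .subst σ ih
  | mp _ _ ih1 ih2 => exact .mp ih1 ih2

lemma isLogic_FLamSet (Λ : Set EFor) : IsLogic (FLamSet Λ) :=
  ⟨fun _ h => FLam_mono (Set.empty_subset _) h,
   fun _ σ h => .subst σ h,
   fun _ _ h1 h2 => .mp h1 h2⟩

def ecode : EFor → ℕ
  | .var n => Nat.pair 0 n
  | .neg φ => Nat.pair 1 (ecode φ)
  | .or φ ψ => Nat.pair 2 (Nat.pair (ecode φ) (ecode ψ))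
  | .and φ ψ => Nat.pair 3 (Nat.pair (ecode φ) (ecode ψ))
  | .imp φ ψ => Nat.pair 4 (Nat.pair (ecode φ) (ecode ψ))
  | .iff φ ψ => Nat.pair 5 (Nat.pair (ecode φ) (ecode ψ))
  | .tri φ ψ => Nat.pair 6 (Nat.pair (ecode φ) (ecode ψ))
  | .hook φ ψ => Nat.pair 7 (Nat.pair (ecode φ) (ecode ψ))

lemma ecode_inj : Function.Injective ecode := by
  intro φ ψ h
  induction φ generalizing ψ with
  | var n => cases ψ <;> simp [ecode, Nat.pair_eq_pair] at h <;> simp [h]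
  | neg φ ih =>
      cases ψ <;> simp [ecode, Nat.pair_eq_pair] at h
      rw [ih h]
  | or φ1 φ2 ih1 ih2 =>
      cases ψ <;> simp [ecode, Nat.pair_eq_pair] at h
      rw [ih1 h.1, ih2 h.2]
  | and φ1 φ2 ih1 ih2 =>
      cases ψ <;> simp [ecode, Nat.pair_eq_pair] at h
      rw [ih1 h.1, ih2 h.2]
  | imp φ1 φ2 ih1 ih2 =>
      cases ψ <;> simp [ecode, Nat.pair_eq_pair] at h
      rw [ih1 h.1, ih2 h.2]
  | iff φ1 φ2 ih1 ih2 =>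
      cases ψ <;> simp [ecode, Nat.pair_eq_pair] at h
      rw [ih1 h.1, ih2 h.2]
  | tri φ1 φ2 ih1 ih2 =>
      cases ψ <;> simp [ecode, Nat.pair_eq_pair] at h
      rw [ih1 h.1, ih2 h.2]
  | hook φ1 φ2 ih1 ih2 =>
      cases ψ <;> simp [ecode, Nat.pair_eq_pair] at h
      rw [ih1 h.1, ih2 h.2]

instance : Countable EFor := ⟨ecode, ecode_inj⟩

instance : Infinite EFor :=
  Infinite.of_injective EFor.var (fun a b h => by injection h)

/-- Shift-and-pad map making any set of naturals nonempty and avoiding 0. -/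
def gshift (A : Set ℕ) : Set ℕ := insert 1 {n | ∃ m ∈ A, n = m + 2}

lemma gshift_ne {A : Set ℕ} : 0 ∉ gshift A := by
  rintro (h | ⟨m, _, h⟩) <;> omega

lemma gshift_nonempty (A : Set ℕ) : (gshift A).Nonempty := ⟨1, Or.inl rfl⟩

lemma gshift_inj : Function.Injective gshift := by
  intro A B h
  ext n
  constructor
  · intro hn
    have : n + 2 ∈ gshift B := h ▸ (Or.inr ⟨n, hn, rfl⟩ : n + 2 ∈ gshift A)
    rcases this with h' | ⟨m, hm, h'⟩
    · omega
    · have : m = n := by omega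
      exact this ▸ hm
  · intro hn
    have : n + 2 ∈ gshift A := h ▸ (Or.inr ⟨n, hn, rfl⟩ : n + 2 ∈ gshift B)
    rcases this with h' | ⟨m, hm, h'⟩
    · omega
    · have : m = n := by omega
      exact this ▸ hm

/-- each FΛ_S is Epstein incomplete, distinct S give distinct
logics, and there are exactly 2^ℵ₀ Epstein-incomplete extensions of F. -/
theorem stmt13 :
    (∀ S : Set ℕ, S.Nonempty → 0 ∉ S → EpsteinIncomplete (FLamSet (LamS S))) ∧
    (∀ S T : Set ℕ, S.Nonempty → T.Nonempty → 0 ∉ S → 0 ∉ T → S ≠ T →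
      FLamSet (LamS S) ≠ FLamSet (LamS T)) ∧
    Cardinal.mk (↥{L : Set EFor | IsLogic L ∧ EpsteinIncomplete L})
      = 2 ^ Cardinal.aleph0 := by
  refine ⟨fun S hne h0 => incomplete hne h0, ?_, ?_⟩
  · intro S T _ _ h0S h0T hST h
    have key : ∃ n, (n ∈ S ∧ n ∉ T) ∨ (n ∈ T ∧ n ∉ S) := by
      by_contra hc
      push_neg at hc
      exact hST (Set.ext fun n => ⟨(hc n).1, (hc n).2⟩)
    rcases key with ⟨n, ⟨hnS, hnT⟩ | ⟨hnT, hnS⟩⟩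
    · exact distinct_aux h0T hnS hnT h
    · exact distinct_aux h0S hnT hnS h.symm
  · apply le_antisymm
    · calc Cardinal.mk ↥{L : Set EFor | IsLogic L ∧ EpsteinIncomplete L}
          ≤ Cardinal.mk (Set EFor) := Cardinal.mk_subtype_le _
        _ = 2 ^ Cardinal.mk EFor := Cardinal.mk_set
        _ = 2 ^ Cardinal.aleph0 := by rw [Cardinal.mk_eq_aleph0]
    · have hinj : Function.Injective
          (fun A : Set ℕ => (⟨FLamSet (LamS (gshift A)),
            isLogic_FLamSet _, incomplete (gshift_nonempty A) gshift_ne⟩ :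
            ↥{L : Set EFor | IsLogic L ∧ EpsteinIncomplete L})) := by
        intro A B h
        by_contra hAB
        have hg : gshift A ≠ gshift B := fun e => hAB (gshift_inj e)
        have heq : FLamSet (LamS (gshift A)) = FLamSet (LamS (gshift B)) :=
          congrArg Subtype.val h
        have key : ∃ n, (n ∈ gshift A ∧ n ∉ gshift B) ∨ (n ∈ gshift B ∧ n ∉ gshift A) := by
          by_contra hc
          push_neg at hc
          exact hg (Set.ext fun n => ⟨(hc n).1, (hc n).2⟩)
        rcases key with ⟨n, ⟨hnA, hnB⟩ | ⟨hnB, hnA⟩⟩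
        · exact distinct_aux gshift_ne hnA hnB heq
        · exact distinct_aux gshift_ne hnB hnA heq.symm
      calc (2 : Cardinal) ^ Cardinal.aleph0
          = 2 ^ Cardinal.mk ℕ := by rw [Cardinal.mk_nat]
        _ = Cardinal.mk (Set ℕ) := Cardinal.mk_set.symm
        _ ≤ _ := Cardinal.mk_le_of_injective hinj
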